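/- The assignment G ↦ N_G extends to an equivalence of categories between the category of groups and the full subcategory of the functor category FinTypeᵒᵖ ⥤ Type spanned by the functors satisfying the nerve condition. -/

import Mathlib

open CategoryTheory Opposite

/-- The map `φ_i : Fin 2 → Fin n` (with `n = m + 2`, `0 ≤ i ≤ n − 2`), `0 ↦ i`, `1 ↦ i + 1`,
as a morphism of `FintypeCat`. -/
def phiMap (m : ℕ) (i : Fin (m + 1)) :
    FintypeCat.of (Fin 2) ⟶ FintypeCat.of (Fin (m + 2)) :=
  FintypeCat.homMk fun j => ⟨i.1 + j.1, by omega⟩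

/-- A functor `N : FinTypeᵒᵖ → Type` satisfies the nerve condition if for every `n ≥ 2`
the map `(N(φ_0), …, N(φ_{n−2})) : N(Fin n) → N(Fin 2)^{n−1}` is a bijection and
`N(∅)`, `N(Fin 1)` are singletons. -/
def NerveCond (N : FintypeCat.{0}ᵒᵖ ⥤ Type) : Prop :=
  (∀ m : ℕ, Function.Bijective fun (x : N.obj (op (FintypeCat.of (Fin (m + 2)))))
      (i : Fin (m + 1)) => N.map (phiMap m i).op x) ∧
  (Nonempty (N.obj (op (FintypeCat.of (Fin 0)))) ∧
    Subsingleton (N.obj (op (FintypeCat.of (Fin 0))))) ∧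
  (Nonempty (N.obj (op (FintypeCat.of (Fin 1)))) ∧
    Subsingleton (N.obj (op (FintypeCat.of (Fin 1)))))

/-- The value of the symmetric nerve of a group `G` on a set `S`:
`{g : S × S → G | g(i,i) = 1, g(i,j)g(j,k) = g(i,k)}`. -/
def NerveSet (G : Type) [Group G] (S : Type) : Type :=
  {g : S × S → G // (∀ i, g (i, i) = 1) ∧ ∀ i j k, g (i, j) * g (j, k) = g (i, k)}

/-- The symmetric nerve `N_G : FinTypeᵒᵖ → Type` of a group `G`. -/
def groupNerve (G : Type) [Group G] : FintypeCat.{0}ᵒᵖ ⥤ Type where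
  obj S := NerveSet G S.unop
  map f := TypeCat.ofHom fun x => ⟨fun p => x.1 (f.unop p.1, f.unop p.2),
    ⟨fun i => x.2.1 _, fun i j k => x.2.2 _ _ _⟩⟩

namespace GNP

abbrev Fn (n : ℕ) : FintypeCat := FintypeCat.of (Fin n)

section Cocycle
variable {G : Type} [Group G]

lemma inv_val {S : Type} (g : NerveSet G S) (i j : S) : g.1 (j, i) = (g.1 (i, j))⁻¹ := by
  have h : g.1 (i, j) * g.1 (j, i) = 1 := by rw [g.2.2 i j i, g.2.1]
  exact (inv_eq_of_mul_eq_one_right h).symm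

lemma val_congr {n : ℕ} (g : NerveSet G (Fin n)) {p q : Fin n × Fin n}
    (h1 : p.1.1 = q.1.1) (h2 : p.2.1 = q.2.1) : g.1 p = g.1 q := by
  exact congrArg g.1 (Prod.ext (Fin.ext h1) (Fin.ext h2))

/-- The consecutive values of a cocycle on `Fin (m+2)`. -/
def consec {m : ℕ} (g : NerveSet G (Fin (m + 2))) (i : Fin (m + 1)) : G :=
  g.1 (⟨i.1, by omega⟩, ⟨i.1 + 1, by omega⟩)

lemma ext_of_consec {m : ℕ} {g g' : NerveSet G (Fin (m + 2))}
    (h : ∀ i, consec g i = consec g' i) : g = g' := by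
  have key : ∀ k : ℕ, ∀ hk : k < m + 2,
      g.1 (⟨0, by omega⟩, ⟨k, hk⟩) = g'.1 (⟨0, by omega⟩, ⟨k, hk⟩) := by
    intro k
    induction k with
    | zero => intro hk; rw [g.2.1, g'.2.1]
    | succ k ih =>
      intro hk
      have hk' : k < m + 2 := by omega
      have h1 := g.2.2 ⟨0, by omega⟩ ⟨k, hk'⟩ ⟨k+1, hk⟩
      have h2 := g'.2.2 ⟨0, by omega⟩ ⟨k, hk'⟩ ⟨k+1, hk⟩
      have hc := h ⟨k, by omega⟩
      unfold consec at hc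
      rw [← h1, ← h2, ih hk']
      congr 1
  refine Subtype.ext (funext fun p => ?_)
  obtain ⟨i, j⟩ := p
  have hgi := g.2.2 ⟨0, by omega⟩ i j
  have hgi' := g'.2.2 ⟨0, by omega⟩ i j
  have e1 : g.1 (i, j) = (g.1 (⟨0, by omega⟩, i))⁻¹ * g.1 (⟨0, by omega⟩, j) := by
    rw [← hgi]; group
  have e1' : g'.1 (i, j) = (g'.1 (⟨0, by omega⟩, i))⁻¹ * g'.1 (⟨0, by omega⟩, j) := by
    rw [← hgi']; group
  have ki := key i.1 i.2
  have kj := key j.1 j.2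
  simp only [Fin.eta] at ki kj
  rw [e1, e1', ki, kj]

/-- Partial products of a (extended) tuple. -/
noncomputable def pprod {m : ℕ} (a : Fin (m + 1) → G) (k : ℕ) : G :=
  ((List.range k).map (fun i => if hi : i < m + 1 then a ⟨i, hi⟩ else 1)).prod

lemma pprod_succ {m : ℕ} (a : Fin (m + 1) → G) (k : ℕ) :
    pprod a (k + 1) = pprod a k * if hk : k < m + 1 then a ⟨k, hk⟩ else 1 := by
  unfold pprod
  rw [List.range_succ, List.map_append, List.prod_append, List.map_singleton,
    List.prod_singleton]

/-- A cocycle on `Fin (m+2)` with prescribed consecutive values. -/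
noncomputable def ofTuple {m : ℕ} (a : Fin (m + 1) → G) : NerveSet G (Fin (m + 2)) := by
  refine ⟨fun p => (pprod a p.1.1)⁻¹ * pprod a p.2.1, ?_, ?_⟩
  · intro i; simp
  · intro i j k; group

lemma consec_ofTuple {m : ℕ} (a : Fin (m + 1) → G) (i : Fin (m + 1)) :
    consec (ofTuple a) i = a i := by
  show (pprod a i.1)⁻¹ * pprod a (i.1 + 1) = a i
  rw [pprod_succ, dif_pos i.2, ← mul_assoc, inv_mul_cancel, one_mul, Fin.eta]

/-- The standard cocycle on `Fin 2` with value `a` at `(0,1)`. -/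
def e2 (a : G) : NerveSet G (Fin 2) :=
  ⟨fun p => a ^ ((p.2.1 : ℤ) - (p.1.1 : ℤ)), fun i => by simp,
   fun i j k => by rw [← zpow_add]; ring_nf⟩

lemma e2_val (a : G) : (e2 a).1 (0, 1) = a := by
  show a ^ (((1 : Fin 2).1 : ℤ) - ((0 : Fin 2).1 : ℤ)) = a
  norm_num

lemma ext2 {g g' : NerveSet G (Fin 2)} (h : g.1 (0, 1) = g'.1 (0, 1)) : g = g' := by
  refine Subtype.ext (funext fun p => ?_)
  obtain ⟨i, j⟩ := p
  fin_cases i <;> fin_cases j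
  · rw [g.2.1, g'.2.1]
  · exact h
  · show g.1 (1, 0) = g'.1 (1, 0)
    rw [inv_val g 0 1, inv_val g' 0 1, h]
  · rw [g.2.1, g'.2.1]

lemma nerveSet_nonempty (S : Type) : Nonempty (NerveSet G S) :=
  ⟨⟨fun _ => 1, fun _ => rfl, fun _ _ _ => one_mul 1⟩⟩

lemma nerveSet_subsingleton (S : Type) [Subsingleton S] (g g' : NerveSet G S) : g = g' := by
  refine Subtype.ext (funext fun p => ?_)
  have hp : p = (p.1, p.1) := Prod.ext rfl (Subsingleton.elim _ _)
  rw [hp, g.2.1, g'.2.1]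

end Cocycle

section GroupNerveCond
variable {G : Type} [Group G]

lemma map_phi_val {m : ℕ} (i : Fin (m + 1)) (x : NerveSet G (Fin (m + 2))) :
    ((groupNerve G).map (phiMap m i).op x).1 ((0 : Fin 2), (1 : Fin 2)) = consec x i := by
  show x.1 (phiMap m i (0 : Fin 2), phiMap m i (1 : Fin 2)) = _
  exact val_congr x (by rfl) (by rfl)

lemma groupNerve_nerveCond (G : Type) [Group G] : NerveCond (groupNerve G) := by
  refine ⟨fun m => ⟨?_, ?_⟩,
    ⟨nerveSet_nonempty _, ⟨fun g g' => nerveSet_subsingleton (S := Fin 0) g g'⟩⟩,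
    ⟨nerveSet_nonempty _, ⟨fun g g' => nerveSet_subsingleton (S := Fin 1) g g'⟩⟩⟩
  · intro x y h
    refine ext_of_consec fun i => ?_
    have := congrArg (fun c => (c i).1 ((0 : Fin 2), (1 : Fin 2))) h
    exact (map_phi_val i x).symm.trans (this.trans (map_phi_val i y))
  · intro c
    refine ⟨ofTuple (fun i => (c i).1 ((0 : Fin 2), (1 : Fin 2))), funext fun i => ?_⟩
    refine ext2 ?_
    rw [map_phi_val, consec_ofTuple]

end GroupNerveCond

section Functor

/-- The nerve functor from groups to the full subcategory. -/
def nerveFunctor : GrpCat.{0} ⥤ CategoryTheory.ObjectProperty.FullSubcategory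
    (fun N : FintypeCat.{0}ᵒᵖ ⥤ Type => NerveCond N) where
  obj G := ⟨groupNerve G, groupNerve_nerveCond G⟩
  map {G H} f := InducedCategory.homMk
    { app := fun S => TypeCat.ofHom fun x => ⟨fun p => f (x.1 p),
        fun i => by show f (x.1 (i, i)) = 1; rw [x.2.1, map_one],
        fun i j k => by show f (x.1 (i, j)) * f (x.1 (j, k)) = f (x.1 (i, k))
                        rw [← map_mul, x.2.2]⟩
      naturality := fun S T u => rfl }
  map_id G := rfl
  map_comp f g := rfl

variable {G H : Type} [Group G] [Group H]

/-- The pair map `Fin 2 → S`, `0 ↦ s`, `1 ↦ t`. -/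
def pairMap {S : FintypeCat} (s t : S) : Fn 2 ⟶ S := FintypeCat.homMk fun j => if j.1 = 0 then s else t

lemma pairMap_zero {S : FintypeCat} (s t : S) : pairMap s t (0 : Fin 2) = s := by
  rfl

lemma pairMap_one {S : FintypeCat} (s t : S) : pairMap s t (1 : Fin 2) = t := by
  rfl

lemma map_pair {S : FintypeCat} (s t : S) (x : NerveSet G S) :
    (groupNerve G).map (pairMap s t).op x = e2 (x.1 (s, t)) := by
  refine ext2 ?_
  show x.1 (pairMap s t (0 : Fin 2), pairMap s t (1 : Fin 2)) = _
  rw [pairMap_zero, pairMap_one, e2_val]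

variable (eta : groupNerve G ⟶ groupNerve H)

/-- The function extracted from a natural transformation of nerves. -/
def tfun (a : G) : H := (eta.app (op (Fn 2)) (e2 a)).1 ((0 : Fin 2), (1 : Fin 2))

lemma eta_val {S : FintypeCat} (x : NerveSet G S) (s t : S) :
    (eta.app (op S) x).1 (s, t) = tfun eta (x.1 (s, t)) := by
  have h := NatTrans.naturality_apply eta (pairMap s t).op x
  rw [map_pair] at h
  have h2 := congrArg (fun g => g.1 ((0 : Fin 2), (1 : Fin 2))) h
  simp only at h2
  rw [show ((groupNerve H).map (pairMap s t).op (eta.app (op S) x)).1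
      ((0 : Fin 2), (1 : Fin 2)) = (eta.app (op S) x).1 (s, t) from by
    show (eta.app (op S) x).1 (pairMap s t (0 : Fin 2), pairMap s t (1 : Fin 2)) = _
    rw [pairMap_zero, pairMap_one]] at h2
  exact h2.symm

lemma val_eq_consec {m : ℕ} (g : NerveSet G (Fin (m + 2))) (i : Fin (m + 1))
    (p : Fin (m + 2) × Fin (m + 2)) (h1 : p.1.1 = i.1) (h2 : p.2.1 = i.1 + 1) :
    g.1 p = consec g i :=
  val_congr g h1 h2

lemma tfun_mul (a b : G) : tfun eta (a * b) = tfun eta a * tfun eta b := by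
  obtain ⟨x, v01, v12⟩ : ∃ x : NerveSet G (Fin 3),
      x.1 (0, 1) = a ∧ x.1 (1, 2) = b := by
    refine ⟨ofTuple (m := 1) ![a, b], ?_, ?_⟩
    · rw [val_eq_consec _ 0 _ (by simp) (by simp), consec_ofTuple]
      simp
    · rw [val_eq_consec _ 1 _ (by simp) (by simp), consec_ofTuple]
      simp
  have v02 : x.1 (0, 2) = a * b := by
    rw [← x.2.2 0 1 2, v01, v12]
  have hy := (eta.app (op (Fn 3)) x).2.2 (0 : Fin 3) (1 : Fin 3) (2 : Fin 3)
  rw [eta_val (S := Fn 3) eta x (0 : Fin 3) (1 : Fin 3),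
    eta_val (S := Fn 3) eta x (1 : Fin 3) (2 : Fin 3),
    eta_val (S := Fn 3) eta x (0 : Fin 3) (2 : Fin 3), v01, v12, v02] at hy
  exact hy.symm

/-- The monoid hom extracted from a natural transformation of nerves. -/
def thom : G →* H := MonoidHom.mk' (tfun eta) (tfun_mul eta)

end Functor

section FullFaithful

lemma nerveFunctor_faithful : nerveFunctor.Faithful := by
  refine ⟨fun {G H} {f g} h => ?_⟩
  refine GrpCat.ext fun a => ?_
  have := congrArg (fun (η : nerveFunctor.obj G ⟶ nerveFunctor.obj H) =>
    (η.hom.app (op (Fn 2)) (e2 a)).1 ((0 : Fin 2), (1 : Fin 2))) h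
  have e : ∀ (f : G ⟶ H), ((nerveFunctor.map f).hom.app (op (Fn 2)) (e2 a)).1
      ((0 : Fin 2), (1 : Fin 2)) = f a := fun f => by
    show f ((e2 a).1 (0, 1)) = f a
    rw [e2_val]
  simpa only [e] using this

lemma nerveFunctor_full : nerveFunctor.Full := by
  refine ⟨fun {G H} eta => ?_⟩
  letI : Group (G : Type) := G.str
  letI : Group (H : Type) := H.str
  refine ⟨(GrpCat.ofHom (thom (eta.hom : groupNerve (G : Type) ⟶ groupNerve (H : Type))) : G ⟶ H), ?_⟩
  ext S x
  refine Subtype.ext (funext fun p => ?_)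
  exact (eta_val (S := S.unop) eta.hom x p.1 p.2).symm

end FullFaithful

section EssSurj

variable (N : FintypeCat.{0}ᵒᵖ ⥤ Type) (hN : NerveCond N)

lemma map_map {A B C : FintypeCat} (u : A ⟶ B) (v : B ⟶ C) (x : N.obj (op C)) :
    N.map u.op (N.map v.op x) = N.map (u ≫ v).op x := by
  rw [op_comp]
  exact (FunctorToTypes.map_comp_apply N v.op u.op x).symm

lemma map_id_eq {A : FintypeCat} (u : A ⟶ A) (h : u = 𝟙 A) (x : N.obj (op A)) :
    N.map u.op x = x := by
  rw [h, op_id, FunctorToTypes.map_id_apply]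

/-- The basepoint of `N(Fin 1)`. -/
noncomputable def pt : N.obj (op (Fn 1)) := hN.2.2.1.some

/-- `N(Fin (m+2)) ≃ N(Fin 2)^(m+1)`. -/
noncomputable def EE (m : ℕ) :
    N.obj (op (Fn (m + 2))) ≃ (Fin (m + 1) → N.obj (op (Fn 2))) :=
  Equiv.ofBijective _ (hN.1 m)

lemma symm_EE_eq {m : ℕ} (c : Fin (m + 1) → N.obj (op (Fn 2))) (x : N.obj (op (Fn (m + 2))))
    (h : ∀ i, N.map (phiMap m i).op x = c i) : (EE N hN m).symm c = x := by
  rw [Equiv.symm_apply_eq]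
  exact funext fun i => (h i).symm

lemma EE_symm_spec {m : ℕ} (c : Fin (m + 1) → N.obj (op (Fn 2))) (i : Fin (m + 1)) :
    N.map (phiMap m i).op ((EE N hN m).symm c) = c i :=
  congrFun ((EE N hN m).apply_symm_apply c) i

/-- terminal map -/
def tm1 : Fn 2 ⟶ Fn 1 := FintypeCat.homMk fun _ => ⟨0, by omega⟩
/-- endpoints of `Fin 3` -/
def end2 : Fn 2 ⟶ Fn 3 := FintypeCat.homMk fun j => ⟨2 * j.1, by omega⟩
/-- the swap of `Fin 2` -/
def sw : Fn 2 ⟶ Fn 2 := FintypeCat.homMk fun j => ⟨1 - j.1, by omega⟩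

/-- Multiplication on `N(Fin 2)`. -/
noncomputable def gmul (a b : N.obj (op (Fn 2))) : N.obj (op (Fn 2)) :=
  N.map end2.op ((EE N hN 1).symm ![a, b])

/-- Unit of `N(Fin 2)`. -/
noncomputable def gone : N.obj (op (Fn 2)) := N.map tm1.op (pt N hN)

/-- Inverse on `N(Fin 2)`. -/
noncomputable def ginv (a : N.obj (op (Fn 2))) : N.obj (op (Fn 2)) := N.map sw.op a

lemma const_eq_gone {S : FintypeCat} (u : Fn 2 ⟶ S) (c : Fn 1 ⟶ S) (h : u = tm1 ≫ c)
    (x : N.obj (op S)) : N.map u.op x = gone N hN := by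
  have : Subsingleton (N.obj (op (Fn 1))) := hN.2.2.2
  rw [h, ← map_map N tm1 c x]
  exact congrArg (N.map tm1.op) (Subsingleton.elim _ _)

lemma gmul_eq {a b : N.obj (op (Fn 2))} {S : FintypeCat} {x : N.obj (op S)} {u : Fn 3 ⟶ S}
    (h0 : N.map (phiMap 1 0 ≫ u).op x = a) (h1 : N.map (phiMap 1 1 ≫ u).op x = b) :
    gmul N hN a b = N.map (end2 ≫ u).op x := by
  have key : (EE N hN 1).symm ![a, b] = N.map u.op x := by
    refine symm_EE_eq N hN _ _ fun i => ?_
    fin_cases i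
    · rw [map_map]; simpa using h0
    · rw [map_map]; simpa using h1
  rw [gmul, key, map_map]

lemma gmul_one (a : N.obj (op (Fn 2))) : gmul N hN a (gone N hN) = a := by
  have h := gmul_eq N hN (a := a) (b := gone N hN) (x := a)
    (u := (FintypeCat.homMk fun j => ⟨min j.1 1, by omega⟩ : Fn 3 ⟶ Fn 2))
    (map_id_eq N _ (by ext j : 1; apply Fin.ext; fin_cases j <;> rfl) a)
    (const_eq_gone N hN _ ((FintypeCat.homMk fun _ => ⟨1, by omega⟩ : Fn 1 ⟶ Fn 2)) (by ext j : 1; apply Fin.ext; fin_cases j <;> rfl) a)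
  rw [h]
  exact map_id_eq N _ (by ext j : 1; apply Fin.ext; fin_cases j <;> rfl) a

lemma one_gmul (a : N.obj (op (Fn 2))) : gmul N hN (gone N hN) a = a := by
  have h := gmul_eq N hN (a := gone N hN) (b := a) (x := a)
    (u := (FintypeCat.homMk fun j => ⟨j.1 - 1, by omega⟩ : Fn 3 ⟶ Fn 2))
    (const_eq_gone N hN _ ((FintypeCat.homMk fun _ => ⟨0, by omega⟩ : Fn 1 ⟶ Fn 2)) (by ext j : 1; apply Fin.ext; fin_cases j <;> rfl) a)
    (map_id_eq N _ (by ext j : 1; apply Fin.ext; fin_cases j <;> rfl) a)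
  rw [h]
  exact map_id_eq N _ (by ext j : 1; apply Fin.ext; fin_cases j <;> rfl) a

lemma inv_gmul (a : N.obj (op (Fn 2))) : gmul N hN (ginv N a) a = gone N hN := by
  have h := gmul_eq N hN (a := ginv N a) (b := a) (x := a)
    (u := (FintypeCat.homMk fun j => ⟨if j.1 = 1 then 0 else 1, by split <;> omega⟩ : Fn 3 ⟶ Fn 2))
    (by
      rw [show phiMap 1 0 ≫ (FintypeCat.homMk fun j => ⟨if j.1 = 1 then 0 else 1, by split <;> omega⟩ :
        Fn 3 ⟶ Fn 2) = sw from by ext j : 1; apply Fin.ext; fin_cases j <;> rfl]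
      rfl)
    (map_id_eq N _ (by ext j : 1; apply Fin.ext; fin_cases j <;> rfl) a)
  rw [h]
  exact const_eq_gone N hN _ ((FintypeCat.homMk fun _ => ⟨1, by omega⟩ : Fn 1 ⟶ Fn 2))
    (by ext j : 1; apply Fin.ext; fin_cases j <;> rfl) a

/-- face maps into `Fin 4` -/
def u012 : Fn 3 ⟶ Fn 4 := FintypeCat.homMk fun j => ⟨j.1, by omega⟩
def u123 : Fn 3 ⟶ Fn 4 := FintypeCat.homMk fun j => ⟨j.1 + 1, by omega⟩
def u023 : Fn 3 ⟶ Fn 4 := FintypeCat.homMk fun j => ⟨if j.1 = 0 then 0 else j.1 + 1, by split <;> omega⟩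
def u013 : Fn 3 ⟶ Fn 4 := FintypeCat.homMk fun j => ⟨if j.1 = 2 then 3 else j.1, by split <;> omega⟩

lemma gmul_assoc (a b c : N.obj (op (Fn 2))) :
    gmul N hN (gmul N hN a b) c = gmul N hN a (gmul N hN b c) := by
  set x := (EE N hN 2).symm ![a, b, c] with hxdef
  have hx : ∀ i, N.map (phiMap 2 i).op x = ![a, b, c] i := fun i => EE_symm_spec N hN _ i
  have h1 : gmul N hN a b = N.map (end2 ≫ u012).op x :=
    gmul_eq N hN
      (by rw [show phiMap 1 0 ≫ u012 = phiMap 2 0 from by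
            ext j : 1; apply Fin.ext; fin_cases j <;> rfl]
          simpa using hx 0)
      (by rw [show phiMap 1 1 ≫ u012 = phiMap 2 1 from by
            ext j : 1; apply Fin.ext; fin_cases j <;> rfl]
          simpa using hx 1)
  have h2 : gmul N hN b c = N.map (end2 ≫ u123).op x :=
    gmul_eq N hN
      (by rw [show phiMap 1 0 ≫ u123 = phiMap 2 1 from by
            ext j : 1; apply Fin.ext; fin_cases j <;> rfl]
          simpa using hx 1)
      (by rw [show phiMap 1 1 ≫ u123 = phiMap 2 2 from by
            ext j : 1; apply Fin.ext; fin_cases j <;> rfl]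
          simpa using hx 2)
  have h3 : gmul N hN (gmul N hN a b) c = N.map (end2 ≫ u023).op x :=
    gmul_eq N hN
      (by rw [show phiMap 1 0 ≫ u023 = end2 ≫ u012 from by
            ext j : 1; apply Fin.ext; fin_cases j <;> rfl]
          exact h1.symm)
      (by rw [show phiMap 1 1 ≫ u023 = phiMap 2 2 from by
            ext j : 1; apply Fin.ext; fin_cases j <;> rfl]
          simpa using hx 2)
  have h4 : gmul N hN a (gmul N hN b c) = N.map (end2 ≫ u013).op x :=
    gmul_eq N hN
      (by rw [show phiMap 1 0 ≫ u013 = phiMap 2 0 from by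
            ext j : 1; apply Fin.ext; fin_cases j <;> rfl]
          simpa using hx 0)
      (by rw [show phiMap 1 1 ≫ u013 = end2 ≫ u123 from by
            ext j : 1; apply Fin.ext; fin_cases j <;> rfl]
          exact h2.symm)
  rw [h3, h4, show end2 ≫ u023 = end2 ≫ u013 from by
    ext j : 1; apply Fin.ext; fin_cases j <;> rfl]

/-- The group structure on `N(Fin 2)`. -/
noncomputable def nerveGroup : Group (N.obj (op (Fn 2))) where
  mul := gmul N hN
  one := gone N hN
  inv := ginv N
  mul_assoc := gmul_assoc N hN
  one_mul := one_gmul N hN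
  mul_one := gmul_one N hN
  inv_mul_cancel := inv_gmul N hN

end EssSurj

section Theta

variable (N : FintypeCat.{0}ᵒᵖ ⥤ Type) (hN : NerveCond N)

/-- triple map -/
def tripleMap {S : FintypeCat} (s t u : S) : Fn 3 ⟶ S :=
  FintypeCat.homMk fun j => if j.1 = 0 then s else if j.1 = 1 then t else u

lemma theta_coc {S : FintypeCat} (x : N.obj (op S)) (s t u : S) :
    gmul N hN (N.map (pairMap s t).op x) (N.map (pairMap t u).op x) =
      N.map (pairMap s u).op x := by
  have h := gmul_eq N hN (x := x) (u := tripleMap s t u)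
    (by rw [show phiMap 1 0 ≫ tripleMap s t u = pairMap s t from by
          ext j : 1; fin_cases j <;> rfl])
    (by rw [show phiMap 1 1 ≫ tripleMap s t u = pairMap t u from by
          ext j : 1; fin_cases j <;> rfl])
  rw [h, show end2 ≫ tripleMap s t u = pairMap s u from by
    ext j : 1; fin_cases j <;> rfl]

/-- The comparison natural transformation. -/
noncomputable def theta : N ⟶ @groupNerve (N.obj (op (Fn 2))) (nerveGroup N hN) where
  app S := TypeCat.ofHom fun x => ⟨fun p => N.map (pairMap p.1 p.2).op x,
    fun i => const_eq_gone N hN _ (FintypeCat.homMk fun _ => i) (by ext j : 1; fin_cases j <;> rfl) x,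
    fun i j k => theta_coc N hN x i j k⟩
  naturality S T f := by
    refine ConcreteCategory.hom_ext _ _ fun x => ?_
    refine Subtype.ext (funext fun p => ?_)
    show N.map (pairMap p.1 p.2).op (N.map f x) =
      N.map (pairMap (f.unop p.1) (f.unop p.2)).op x
    rw [show pairMap (f.unop p.1) (f.unop p.2) = pairMap p.1 p.2 ≫ f.unop from by
      ext j : 1; fin_cases j <;> rfl]
    exact map_map N (pairMap p.1 p.2) f.unop x

lemma theta_bij_fin (n : ℕ) : Function.Bijective ((theta N hN).app (op (Fn n))) := by
  letI : Group (N.obj (op (Fn 2))) := nerveGroup N hN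
  match n with
  | 0 =>
    refine ⟨fun x y h => hN.2.1.2.elim x y, fun g => ⟨hN.2.1.1.some, ?_⟩⟩
    exact nerveSet_subsingleton (S := Fin 0) _ g
  | 1 =>
    refine ⟨fun x y h => hN.2.2.2.elim x y, fun g => ⟨hN.2.2.1.some, ?_⟩⟩
    exact nerveSet_subsingleton (S := Fin 1) _ g
  | (m + 2) =>
    have key : ∀ (x : N.obj (op (Fn (m + 2)))) (i : Fin (m + 1)),
        consec ((theta N hN).app (op (Fn (m + 2))) x) i = N.map (phiMap m i).op x := by
      intro x i
      show N.map (pairMap (S := Fn (m + 2)) ⟨i.1, by omega⟩ ⟨i.1 + 1, by omega⟩).op x = _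
      rw [show (pairMap (S := Fn (m + 2)) ⟨i.1, by omega⟩ ⟨i.1 + 1, by omega⟩ :
          Fn 2 ⟶ Fn (m + 2)) = phiMap m i from by
        ext j : 1; apply Fin.ext; fin_cases j <;> rfl]
    constructor
    · intro x y h
      refine (hN.1 m).1 (funext fun i => ?_)
      show N.map (phiMap m i).op x = N.map (phiMap m i).op y
      rw [← key x i, ← key y i, h]
    · intro g
      obtain ⟨x, hx⟩ := (hN.1 m).2 (fun i => consec g i)
      refine ⟨x, ext_of_consec fun i => ?_⟩
      rw [key x i]
      exact congrFun hx i

lemma map_bijective_of_iso (M : FintypeCat.{0}ᵒᵖ ⥤ Type) {A B : FintypeCat} (u : A ⟶ B)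
    (v : B ⟶ A) (h1 : u ≫ v = 𝟙 A) (h2 : v ≫ u = 𝟙 B) :
    Function.Bijective (M.map u.op) := by
  refine Function.bijective_iff_has_inverse.mpr ⟨M.map v.op, fun y => ?_, fun y => ?_⟩
  · rw [map_map M v u y, h2, op_id, FunctorToTypes.map_id_apply]
  · rw [map_map M u v y, h1, op_id, FunctorToTypes.map_id_apply]

lemma theta_app_bij (S : FintypeCat.{0}ᵒᵖ) :
    Function.Bijective ((theta N hN).app S) := by
  obtain ⟨n, ⟨e⟩⟩ : ∃ n, Nonempty ((S.unop : Type) ≃ Fin n) :=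
    ⟨Nat.card S.unop, ⟨Finite.equivFin _⟩⟩
  let u : S.unop ⟶ Fn n := FintypeCat.homMk fun s => e s
  let v : Fn n ⟶ S.unop := FintypeCat.homMk fun j => e.symm j
  have h1 : u ≫ v = 𝟙 S.unop := by ext s; exact e.symm_apply_apply s
  have h2 : v ≫ u = 𝟙 (Fn n) := by ext j : 1; exact e.apply_symm_apply j
  have hb1 := map_bijective_of_iso N u v h1 h2
  have hb2 := map_bijective_of_iso
    (@groupNerve (N.obj (op (Fn 2))) (nerveGroup N hN)) u v h1 h2
  have hnat : (theta N hN).app S ∘ N.map u.op =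
      (@groupNerve (N.obj (op (Fn 2))) (nerveGroup N hN)).map u.op ∘
        (theta N hN).app (op (Fn n)) := by
    funext y
    exact NatTrans.naturality_apply (theta N hN) (u.op : op (Fn n) ⟶ S) y
  have hcb : Function.Bijective ((theta N hN).app S ∘ N.map u.op) := by
    rw [hnat]
    exact hb2.comp (theta_bij_fin N hN n)
  exact (Function.Bijective.of_comp_iff _ hb1).mp hcb

end Theta

lemma nerveFunctor_essSurj : nerveFunctor.EssSurj := by
  refine ⟨fun Y => ?_⟩
  letI : Group (Y.obj.obj (op (Fn 2))) := nerveGroup Y.obj Y.property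
  have hiso : IsIso (theta Y.obj Y.property) := by
    have : ∀ S, IsIso ((theta Y.obj Y.property).app S) :=
      fun S => (isIso_iff_bijective _).2 (theta_app_bij _ _ S)
    exact NatIso.isIso_of_isIso_app _
  refine ⟨GrpCat.of (Y.obj.obj (op (Fn 2))), ⟨?_⟩⟩
  exact (ObjectProperty.ι _).preimageIso (asIso (theta Y.obj Y.property)).symm

end GNP

theorem groupNerve_equivalence :
    ∃ E : GrpCat.{0} ≌ CategoryTheory.ObjectProperty.FullSubcategory
        (fun N : FintypeCat.{0}ᵒᵖ ⥤ Type => NerveCond N),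
      ∀ G : GrpCat.{0}, (E.functor.obj G).obj = groupNerve G := by
  letI := GNP.nerveFunctor_faithful
  letI := GNP.nerveFunctor_full
  letI := GNP.nerveFunctor_essSurj
  letI : GNP.nerveFunctor.IsEquivalence := {}
  exact ⟨GNP.nerveFunctor.asEquivalence, fun G => rfl⟩
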